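/- Let ω, η ∈ Ω_∞ and let π be the permutation of {0,1,2} swapping 1 and 2 and fixing 0. If the images p(L_ω) and p(L_η) coincide as subsets of (ℤ/2ℤ)^ℕ, then ω = η or ω_i = π(η_i) for all i. -/

import Mathlib

/-!  Common setup: the group `Aut(X*)` of automorphisms of the rooted binary tree,
the Grigorchuk generators `a, b_ω, c_ω, d_ω`, and the subgroups `G_ω`, `L_ω`. -/

/-- Finite words over `X = {0,1}`: vertices of the rooted binary tree. -/
abbrev Word := List Bool

/-- `Aut(X*)`: bijections of the set of words which preserve word length
(hence fix the empty word) and preserve the prefix relation, as a subgroup of the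
permutation group of `Word`. -/
def TreeAut : Subgroup (Equiv.Perm Word) where
  carrier := {g | (∀ w : Word, (g w).length = w.length) ∧
      ∀ u v : Word, u <+: v ↔ g u <+: g v}
  one_mem' := ⟨fun _ => rfl, fun _ _ => Iff.rfl⟩
  mul_mem' := by
    rintro g h ⟨hg1, hg2⟩ ⟨hh1, hh2⟩
    refine ⟨fun w => ?_, fun u v => ?_⟩
    · simpa using (hg1 (h w)).trans (hh1 w)
    · simpa using (hh2 u v).trans (hg2 (h u) (h v))
  inv_mem' := by
    rintro g ⟨hg1, hg2⟩
    refine ⟨fun w => ?_, fun u v => ?_⟩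
    · have := hg1 (g⁻¹ w)
      rw [Equiv.Perm.coe_inv, Equiv.apply_symm_apply] at this
      exact this.symm
    · have := (hg2 (g⁻¹ u) (g⁻¹ v)).symm
      simpa using this

/-- Application of a tree automorphism to a word. -/
def ap (g : ↥TreeAut) (w : Word) : Word := (g : Equiv.Perm Word) w

/-- The root permutation `a` (as a map): `a(0v) = 1v`, `a(1v) = 0v`. -/
def aFun : Word → Word
  | [] => []
  | x :: v => (!x) :: v

/-- The common recursive pattern of the maps `b_ω, c_ω, d_ω`: on `0v` act by the
identity if `ω 0 = k` and by `a` otherwise, on `1v` recurse with the shifted sequence.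
(`k = 2` gives `b`, `k = 1` gives `c`, `k = 0` gives `d`.) -/
def genFun (k : Fin 3) : (ℕ → Fin 3) → Word → Word
  | _, [] => []
  | ω, false :: v => false :: (if ω 0 = k then v else aFun v)
  | ω, true :: v => true :: genFun k (fun n => ω (n + 1)) v

lemma aFun_invol : Function.Involutive aFun := by
  intro w; cases w with
  | nil => rfl
  | cons x v => simp [aFun]

lemma aFun_length : ∀ w : Word, (aFun w).length = w.length := by
  intro w; cases w <;> simp [aFun]

lemma aFun_prefix : ∀ u v : Word, u <+: v → aFun u <+: aFun v := by
  intro u v h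
  cases u with
  | nil => simp [aFun]
  | cons x u' =>
    cases v with
    | nil => simp at h
    | cons y v' =>
      rw [List.cons_prefix_cons] at h
      obtain ⟨rfl, h2⟩ := h
      simpa [aFun, List.cons_prefix_cons] using h2

lemma genFun_length (k : Fin 3) : ∀ (w : Word) (ω : ℕ → Fin 3),
    (genFun k ω w).length = w.length
  | [], _ => rfl
  | false :: v, ω => by
    by_cases h : ω 0 = k <;> simp [genFun, h, aFun_length]
  | true :: v, ω => by
    simp [genFun, genFun_length k v]

lemma genFun_invol (k : Fin 3) : ∀ (w : Word) (ω : ℕ → Fin 3),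
    genFun k ω (genFun k ω w) = w
  | [], _ => rfl
  | false :: v, ω => by
    by_cases h : ω 0 = k <;> simp [genFun, h, aFun_invol v]
  | true :: v, ω => by
    simp [genFun, genFun_invol k v]

lemma genFun_prefix (k : Fin 3) : ∀ (u v : Word) (ω : ℕ → Fin 3),
    u <+: v → genFun k ω u <+: genFun k ω v
  | [], v, ω, _ => by simp [genFun]
  | x :: u', [], ω, h => by simp at h
  | x :: u', y :: v', ω, h => by
    rw [List.cons_prefix_cons] at h
    obtain ⟨rfl, h2⟩ := h
    cases x with
    | false =>
      by_cases h0 : ω 0 = k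
      · simpa [genFun, h0, List.cons_prefix_cons] using h2
      · simpa [genFun, h0, List.cons_prefix_cons] using aFun_prefix u' v' h2
    | true =>
      simpa [genFun, List.cons_prefix_cons] using genFun_prefix k u' v' _ h2

/-- Build an element of `Aut(X*)` from an involutive, length-preserving,
prefix-preserving map. -/
def mkAut (f : Word → Word) (hinv : Function.Involutive f)
    (hlen : ∀ w, (f w).length = w.length)
    (hpre : ∀ u v : Word, u <+: v → f u <+: f v) : ↥TreeAut :=
  ⟨hinv.toPerm, by
    refine ⟨fun w => ?_, fun u v => ⟨fun h => ?_, fun h => ?_⟩⟩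
    · simpa using hlen w
    · simpa using hpre u v h
    · have := hpre _ _ (by simpa using h)
      simpa [hinv u, hinv v] using this⟩

/-- The automorphism `a`. -/
def aAut : ↥TreeAut := mkAut aFun aFun_invol aFun_length aFun_prefix

/-- The automorphism `b_ω`. -/
def bAut (ω : ℕ → Fin 3) : ↥TreeAut :=
  mkAut (genFun 2 ω) (fun w => genFun_invol 2 w ω) (fun w => genFun_length 2 w ω)
    (fun u v h => genFun_prefix 2 u v ω h)

/-- The automorphism `c_ω`. -/
def cAut (ω : ℕ → Fin 3) : ↥TreeAut :=
  mkAut (genFun 1 ω) (fun w => genFun_invol 1 w ω) (fun w => genFun_length 1 w ω)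
    (fun u v h => genFun_prefix 1 u v ω h)

/-- The automorphism `d_ω`. -/
def dAut (ω : ℕ → Fin 3) : ↥TreeAut :=
  mkAut (genFun 0 ω) (fun w => genFun_invol 0 w ω) (fun w => genFun_length 0 w ω)
    (fun u v h => genFun_prefix 0 u v ω h)

/-- `G_ω = ⟨a, b_ω, c_ω, d_ω⟩`. -/
def Ggrp (ω : ℕ → Fin 3) : Subgroup ↥TreeAut :=
  Subgroup.closure {aAut, bAut ω, cAut ω, dAut ω}

/-- `L_ω = ⟨a b_ω, d_ω⟩`. -/
def Lgrp (ω : ℕ → Fin 3) : Subgroup ↥TreeAut :=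
  Subgroup.closure {aAut * bAut ω, dAut ω}

/-- The `n`-fold shift `σⁿω`. -/
def shift (n : ℕ) (ω : ℕ → Fin 3) : ℕ → Fin 3 := fun m => ω (m + n)

/-- `Ω_∞`: sequences in which each of `0, 1, 2` occurs infinitely often. -/
def OmegaInf : Set (ℕ → Fin 3) := {ω | ∀ k : Fin 3, ∀ N : ℕ, ∃ n, N ≤ n ∧ ω n = k}

/-- `g` fixes every word of length `n`. -/
def fixesLevel (g : ↥TreeAut) (n : ℕ) : Prop := ∀ w : Word, w.length = n → ap g w = w

/-- The subgroup of all tree automorphisms acting trivially outside the subtree `uX*`. -/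
def ristSubgroup (u : Word) : Subgroup ↥TreeAut where
  carrier := {g | ∀ w : Word, ¬ u <+: w → ap g w = w}
  one_mem' := by intro w _; rfl
  mul_mem' := by
    intro g h hg hh w hw
    have e1 : ap g w = w := hg w hw
    have e2 : ap h w = w := hh w hw
    simp only [ap] at e1 e2
    show (g : Equiv.Perm Word) ((h : Equiv.Perm Word) w) = w
    rw [e2, e1]
  inv_mem' := by
    intro g hg w hw
    have h1' : ap g w = w := hg w hw
    have h1 : (g : Equiv.Perm Word) w = w := h1'
    show ((g : Equiv.Perm Word))⁻¹ w = w
    conv_lhs => rw [← h1]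
    simp

/-- The subgroup of all tree automorphisms fixing every word of length `n`
(the `n`-th level stabilizer in `Aut(X*)`). -/
def levelStab (n : ℕ) : Subgroup ↥TreeAut where
  carrier := {g | fixesLevel g n}
  one_mem' := by intro w _; rfl
  mul_mem' := by
    intro g h hg hh w hw
    have e1 : ap g w = w := hg w hw
    have e2 : ap h w = w := hh w hw
    simp only [ap] at e1 e2
    show (g : Equiv.Perm Word) ((h : Equiv.Perm Word) w) = w
    rw [e2, e1]
  inv_mem' := by
    intro g hg w hw
    have h1' : ap g w = w := hg w hw
    have h1 : (g : Equiv.Perm Word) w = w := h1'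
    show ((g : Equiv.Perm Word))⁻¹ w = w
    conv_lhs => rw [← h1]
    simp

/-- The rigid level stabilizer `Rist_G(n)`: the subgroup generated by the rigid vertex
stabilizers `Rist_G(u) = G ⊓ ristSubgroup u` over all words `u` of length `n`. -/
def ristLevel (G : Subgroup ↥TreeAut) (n : ℕ) : Subgroup ↥TreeAut :=
  ⨆ u ∈ {u : Word | u.length = n}, G ⊓ ristSubgroup u

/-- `G` acts transitively on each level of the tree. -/
def LevelTransitive (G : Subgroup ↥TreeAut) : Prop :=
  ∀ u v : Word, u.length = v.length → ∃ g ∈ G, ap g u = v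

/-- A set of tree automorphisms acts level transitively on the subtree `vX*`. -/
def LevelTransitiveOn (S : Set ↥TreeAut) (v : Word) : Prop :=
  ∀ u₁ u₂ : Word, u₁.length = u₂.length → ∃ g ∈ S, ap g (v ++ u₁) = v ++ u₂

/-- `L_{n,ω}`: `L_{0,ω} = L_ω` and `L_{n,ω}` is generated by the squares of
elements of `L_{n-1,ω}`. -/
def Lsq (ω : ℕ → Fin 3) : ℕ → Subgroup ↥TreeAut
  | 0 => Lgrp ω
  | n + 1 => Subgroup.closure {x | ∃ y ∈ Lsq ω n, x = y * y}

/-- `g` is active at the word `v`: the section `g_v` acts nontrivially on the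
one-letter words. -/
def IsActive (g : ↥TreeAut) (v : Word) : Prop :=
  ap g (v ++ [false]) ≠ ap g v ++ [false]

open scoped Classical in
/-- `p(g)_n`: the number of words of length `n` at which `g` is active, mod 2
(words of length `n` are enumerated as `List.ofFn f` for `f : Fin n → Bool`). -/
noncomputable def pMap (g : ↥TreeAut) (n : ℕ) : ZMod 2 :=
  (((Finset.univ : Finset (Fin n → Bool)).filter
    (fun f => IsActive g (List.ofFn f))).card : ZMod 2)

-- basic ap lemmas
lemma ap_mul (g h : ↥TreeAut) (w : Word) : ap (g * h) w = ap g (ap h w) := rfl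

lemma ap_one (w : Word) : ap 1 w = w := rfl

lemma ap_len (g : ↥TreeAut) (w : Word) : (ap g w).length = w.length := g.2.1 w

lemma ap_prefix (g : ↥TreeAut) (u v : Word) : u <+: v ↔ ap g u <+: ap g v := g.2.2 u v

lemma ap_inj (g : ↥TreeAut) {u v : Word} (h : ap g u = ap g v) : u = v :=
  (g : Equiv.Perm Word).injective h

lemma ap_snoc (g : ↥TreeAut) (v : Word) (x : Bool) :
    ∃ y, ap g (v ++ [x]) = ap g v ++ [y] := by
  obtain ⟨t, ht⟩ := (ap_prefix g v (v ++ [x])).mp ⟨[x], rfl⟩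
  have h1 : t.length = 1 := by
    have h2 := ap_len g (v ++ [x])
    have h3 := ap_len g v
    have hl := congrArg List.length ht
    simp only [List.length_append] at hl
    rw [h2, h3] at hl
    simp at hl
    omega
  obtain ⟨y, rfl⟩ := List.length_eq_one_iff.mp h1
  exact ⟨y, ht.symm⟩

lemma isActive_iff (g : ↥TreeAut) (v : Word) :
    IsActive g v ↔ ap g (v ++ [false]) = ap g v ++ [true] := by
  obtain ⟨y, hy⟩ := ap_snoc g v false
  cases y <;> simp [IsActive, hy]

lemma ap_snoc_true_active (g : ↥TreeAut) (v : Word) (h : IsActive g v) :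
    ap g (v ++ [true]) = ap g v ++ [false] := by
  obtain ⟨y, hy⟩ := ap_snoc g v true
  cases y with
  | false => exact hy
  | true =>
    exfalso
    rw [isActive_iff] at h
    have : ap g (v ++ [false]) = ap g (v ++ [true]) := by rw [h, hy]
    simpa using ap_inj g this

lemma ap_snoc_true_inactive (g : ↥TreeAut) (v : Word) (h : ¬ IsActive g v) :
    ap g (v ++ [true]) = ap g v ++ [true] := by
  obtain ⟨y, hy⟩ := ap_snoc g v true
  cases y with
  | true => exact hy
  | false =>
    exfalso
    simp only [IsActive, not_not] at h
    have : ap g (v ++ [false]) = ap g (v ++ [true]) := by rw [h, hy]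
    simpa using ap_inj g this

lemma ap_snoc_false_inactive (g : ↥TreeAut) (v : Word) (h : ¬ IsActive g v) :
    ap g (v ++ [false]) = ap g v ++ [false] := not_not.mp h

lemma isActive_mul (g h : ↥TreeAut) (v : Word) :
    IsActive (g * h) v ↔ ¬ (IsActive g (ap h v) ↔ IsActive h v) := by
  by_cases Hh : IsActive h v <;> by_cases Hg : IsActive g (ap h v)
  · have : ap (g * h) (v ++ [false]) = ap (g * h) v ++ [false] := by
      rw [ap_mul, (isActive_iff h v).mp Hh, ap_snoc_true_active g _ Hg, ap_mul]
    have hA : ¬ IsActive (g * h) v := by simp [IsActive, this]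
    tauto
  · have : ap (g * h) (v ++ [false]) = ap (g * h) v ++ [true] := by
      rw [ap_mul, (isActive_iff h v).mp Hh, ap_snoc_true_inactive g _ Hg, ap_mul]
    have hA : IsActive (g * h) v := by simp [IsActive, this]
    tauto
  · have : ap (g * h) (v ++ [false]) = ap (g * h) v ++ [true] := by
      rw [ap_mul, ap_snoc_false_inactive h _ Hh, (isActive_iff g _).mp Hg, ap_mul]
    have hA : IsActive (g * h) v := by simp [IsActive, this]
    tauto
  · have : ap (g * h) (v ++ [false]) = ap (g * h) v ++ [false] := by
      rw [ap_mul, ap_snoc_false_inactive h _ Hh, ap_snoc_false_inactive g _ Hg, ap_mul]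
    have hA : ¬ IsActive (g * h) v := by simp [IsActive, this]
    tauto
open scoped Classical in
lemma pMap_sum (g : ↥TreeAut) (n : ℕ) :
    pMap g n = ∑ f : Fin n → Bool, (if IsActive g (List.ofFn f) then (1 : ZMod 2) else 0) := by
  rw [pMap, Finset.card_filter]
  push_cast
  rfl

lemma pMap_one : pMap 1 = 0 := by
  funext n
  classical
  rw [pMap_sum]
  have : ∀ f : Fin n → Bool, ¬ IsActive 1 (List.ofFn f) := by
    intro f
    simp [IsActive, ap_one]
  simp [this]

lemma ofFn_get_len {n : ℕ} (l : Word) (hl : l.length = n) :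
    List.ofFn (fun i : Fin n => l.get ⟨i, by omega⟩) = l := by
  apply List.ext_getElem
  · simp [hl]
  · intro i h1 h2
    simp

lemma pMap_mul (g h : ↥TreeAut) : pMap (g * h) = pMap g + pMap h := by
  funext n
  classical
  simp only [Pi.add_apply, pMap_sum]
  have key : ∀ f : Fin n → Bool,
      (if IsActive (g * h) (List.ofFn f) then (1 : ZMod 2) else 0) =
      (if IsActive g (ap h (List.ofFn f)) then (1 : ZMod 2) else 0) +
      (if IsActive h (List.ofFn f) then (1 : ZMod 2) else 0) := by
    intro f
    rw [if_congr (isActive_mul g h (List.ofFn f)) rfl rfl]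
    by_cases H1 : IsActive g (ap h (List.ofFn f)) <;>
      by_cases H2 : IsActive h (List.ofFn f) <;> simp [H1, H2] <;> decide
  rw [Finset.sum_congr rfl (fun f _ => key f), Finset.sum_add_distrib]
  congr 1
  -- reindex by the bijection induced by h on level n
  let T : (Fin n → Bool) → (Fin n → Bool) := fun f i =>
    (ap h (List.ofFn f)).get ⟨i, by rw [ap_len]; simp⟩
  have hT : ∀ f, List.ofFn (T f) = ap h (List.ofFn f) := by
    intro f
    exact ofFn_get_len _ (by rw [ap_len]; simp)
  have Tinj : Function.Injective T := by
    intro f1 f2 hf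
    have : ap h (List.ofFn f1) = ap h (List.ofFn f2) := by rw [← hT, ← hT, hf]
    have := ap_inj h this
    exact List.ofFn_injective this
  have Tbij : Function.Bijective T := Finite.injective_iff_bijective.mp Tinj
  calc ∑ f : Fin n → Bool, (if IsActive g (ap h (List.ofFn f)) then (1 : ZMod 2) else 0)
      = ∑ f : Fin n → Bool, (if IsActive g (List.ofFn (T f)) then (1 : ZMod 2) else 0) := by
        simp_rw [hT]
    _ = ∑ f : Fin n → Bool, (if IsActive g (List.ofFn f) then (1 : ZMod 2) else 0) :=
        Tbij.sum_comp (fun f => if IsActive g (List.ofFn f) then (1 : ZMod 2) else 0)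
lemma ap_aAut (w : Word) : ap aAut w = aFun w := rfl
lemma ap_bAut (ω : ℕ → Fin 3) (w : Word) : ap (bAut ω) w = genFun 2 ω w := rfl
lemma ap_cAut (ω : ℕ → Fin 3) (w : Word) : ap (cAut ω) w = genFun 1 ω w := rfl
lemma ap_dAut (ω : ℕ → Fin 3) (w : Word) : ap (dAut ω) w = genFun 0 ω w := rfl

lemma isActive_aAut (v : Word) : IsActive aAut v ↔ v = [] := by
  cases v with
  | nil => simp [IsActive, ap_aAut, aFun]
  | cons x v' => simp [IsActive, ap_aAut, aFun]

lemma genFun_active (k : Fin 3) :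
    ∀ (v : Word) (ω : ℕ → Fin 3),
      (genFun k ω (v ++ [false]) ≠ genFun k ω v ++ [false]) ↔
        ∃ m, v = List.replicate m true ++ [false] ∧ ω m ≠ k
  | [], ω => by
    constructor
    · intro hcontra
      exact absurd (by simp [genFun, aFun]) hcontra
    · rintro ⟨m, hm, -⟩
      exact absurd (congrArg List.length hm) (by simp)
  | false :: v', ω => by
    by_cases h0 : ω 0 = k
    · constructor
      · intro hcontra
        exact absurd (by simp [genFun, h0]) hcontra
      · rintro ⟨m, hm, hne⟩
        cases m with
        | zero => simp at hm; subst hm; exact absurd h0 (by simpa using hne)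
        | succ m' => simp [List.replicate_succ] at hm
    · cases v' with
      | nil =>
        constructor
        · intro _; exact ⟨0, by simp, by simpa using h0⟩
        · intro _; simp [genFun, h0, aFun]
      | cons x r =>
        constructor
        · intro hcontra
          exact absurd (by simp [genFun, h0, aFun]) hcontra
        · rintro ⟨m, hm, hne⟩
          cases m with
          | zero => simp at hm
          | succ m' => simp [List.replicate_succ] at hm
  | true :: v', ω => by
    have IH := genFun_active k v' (fun n => ω (n + 1))
    constructor
    · intro hact
      have : genFun k (fun n => ω (n + 1)) (v' ++ [false]) ≠
          genFun k (fun n => ω (n + 1)) v' ++ [false] := by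
        intro he
        exact hact (by simp [genFun, he])
      obtain ⟨m, hm, hne⟩ := IH.mp this
      exact ⟨m + 1, by simp [List.replicate_succ, hm], hne⟩
    · rintro ⟨m, hm, hne⟩
      cases m with
      | zero => simp at hm
      | succ m' =>
        simp [List.replicate_succ] at hm
        have := IH.mpr ⟨m', hm, hne⟩
        simp [genFun]
        exact this
lemma ofFn_g0 (m : ℕ) :
    List.ofFn (fun i : Fin (m+1) => decide (i.val < m)) = List.replicate m true ++ [false] := by
  apply List.ext_getElem
  · simp
  · intro i h1 h2
    simp only [List.getElem_ofFn]
    by_cases hi : i < m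
    · rw [List.getElem_append_left (by simpa using hi)]
      simp [hi]
    · have him : i = m := by
        simp only [List.length_ofFn] at h1
        omega
      subst him
      rw [List.getElem_append_right (by simp)]
      simp [hi]

lemma pMap_genAut {G : ↥TreeAut} {ω : ℕ → Fin 3} {k : Fin 3}
    (hact : ∀ v, IsActive G v ↔ ∃ m, v = List.replicate m true ++ [false] ∧ ω m ≠ k) (n : ℕ) :
    pMap G n = if n = 0 then 0 else if ω (n-1) = k then 0 else 1 := by
  classical
  cases n with
  | zero =>
    rw [pMap_sum]
    have : ∀ f : Fin 0 → Bool, ¬ IsActive G (List.ofFn f) := by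
      intro f
      rw [hact]
      rintro ⟨m, hm, -⟩
      exact absurd (congrArg List.length hm) (by simp)
    have h0 := this (fun i => i.elim0)
    simp only [List.ofFn_zero] at h0
    simp [h0]
  | succ m =>
    rw [pMap_sum]
    set g₀ : Fin (m+1) → Bool := fun i => decide (i.val < m) with hg₀
    have hpred : ∀ f : Fin (m+1) → Bool,
        IsActive G (List.ofFn f) ↔ (f = g₀ ∧ ω m ≠ k) := by
      intro f
      rw [hact]
      constructor
      · rintro ⟨m', hm', hne⟩
        have hlen : m' = m := by
          have := congrArg List.length hm'
          simp at this
          omega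
        subst hlen
        refine ⟨List.ofFn_injective ?_, hne⟩
        rw [hm', hg₀, ofFn_g0]
      · rintro ⟨rfl, hne⟩
        exact ⟨m, by rw [hg₀, ofFn_g0], hne⟩
    rw [Finset.sum_congr rfl (fun f _ => if_congr (hpred f) rfl rfl)]
    by_cases hk : ω m = k
    · simp [hk]
    · have : ∀ f : Fin (m+1) → Bool,
          (if f = g₀ ∧ ω m ≠ k then (1 : ZMod 2) else 0) = if f = g₀ then 1 else 0 := by
        intro f
        simp [hk]
      rw [Finset.sum_congr rfl (fun f _ => this f)]
      rw [Finset.sum_ite_eq' Finset.univ g₀ (fun _ => (1 : ZMod 2))]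
      simp [hk]

lemma isActive_bAut (ω : ℕ → Fin 3) (v : Word) :
    IsActive (bAut ω) v ↔ ∃ m, v = List.replicate m true ++ [false] ∧ ω m ≠ 2 := by
  rw [IsActive, ap_bAut, ap_bAut]
  exact genFun_active 2 v ω

lemma isActive_dAut (ω : ℕ → Fin 3) (v : Word) :
    IsActive (dAut ω) v ↔ ∃ m, v = List.replicate m true ++ [false] ∧ ω m ≠ 0 := by
  rw [IsActive, ap_dAut, ap_dAut]
  exact genFun_active 0 v ω

lemma pMap_bAut (ω : ℕ → Fin 3) (n : ℕ) :
    pMap (bAut ω) n = if n = 0 then 0 else if ω (n-1) = 2 then 0 else 1 :=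
  pMap_genAut (isActive_bAut ω) n

lemma pMap_dAut (ω : ℕ → Fin 3) (n : ℕ) :
    pMap (dAut ω) n = if n = 0 then 0 else if ω (n-1) = 0 then 0 else 1 :=
  pMap_genAut (isActive_dAut ω) n

lemma pMap_aAut (n : ℕ) : pMap aAut n = if n = 0 then 1 else 0 := by
  classical
  rw [pMap_sum]
  cases n with
  | zero =>
    have h0 : IsActive aAut ([] : Word) := by
      rw [isActive_aAut]
    have : ∀ f : Fin 0 → Bool, IsActive aAut (List.ofFn f) := by
      intro f
      simpa using h0
    rw [Finset.sum_congr rfl (fun f _ => if_pos (this f))]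
    simp
  | succ m =>
    have : ∀ f : Fin (m+1) → Bool, ¬ IsActive aAut (List.ofFn f) := by
      intro f
      rw [isActive_aAut]
      simp
    rw [Finset.sum_congr rfl (fun f _ => if_neg (this f))]
    simp
/-- The value of `p(a b_ω)`. -/
def Ufun (ω : ℕ → Fin 3) : ℕ → ZMod 2
  | 0 => 1
  | n + 1 => if ω n = 2 then 0 else 1

/-- The value of `p(d_ω)`. -/
def Vfun (ω : ℕ → Fin 3) : ℕ → ZMod 2
  | 0 => 0
  | n + 1 => if ω n = 0 then 0 else 1

lemma pMap_ab (ω : ℕ → Fin 3) : pMap (aAut * bAut ω) = Ufun ω := by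
  funext n
  rw [pMap_mul, Pi.add_apply, pMap_aAut, pMap_bAut]
  cases n with
  | zero => simp [Ufun]
  | succ m => simp [Ufun]

lemma pMap_d (ω : ℕ → Fin 3) : pMap (dAut ω) = Vfun ω := by
  funext n
  rw [pMap_dAut]
  cases n with
  | zero => simp [Vfun]
  | succ m => simp [Vfun]

lemma pMap_inv (g : ↥TreeAut) : pMap g⁻¹ = pMap g := by
  have h1 : pMap g + pMap g⁻¹ = 0 := by
    rw [← pMap_mul, mul_inv_cancel, pMap_one]
  funext n
  have h2 := congrFun h1 n
  have : ∀ a b : ZMod 2, a + b = 0 → b = a := by decide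
  exact this _ _ h2

lemma sq_zero (x : ℕ → ZMod 2) : x + x = 0 := by
  funext n
  have : ∀ a : ZMod 2, a + a = 0 := by decide
  exact this _

lemma add_mem_T {u v x y : ℕ → ZMod 2}
    (hx : x ∈ ({0, u, v, u + v} : Set (ℕ → ZMod 2)))
    (hy : y ∈ ({0, u, v, u + v} : Set (ℕ → ZMod 2))) :
    x + y ∈ ({0, u, v, u + v} : Set (ℕ → ZMod 2)) := by
  simp only [Set.mem_insert_iff, Set.mem_singleton_iff] at hx hy ⊢
  rcases hx with hx | hx | hx | hx <;> rcases hy with hy | hy | hy | hy <;> rw [hx, hy]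
  · exact Or.inl (by rw [add_zero])
  · exact Or.inr (Or.inl (by rw [zero_add]))
  · exact Or.inr (Or.inr (Or.inl (by rw [zero_add])))
  · exact Or.inr (Or.inr (Or.inr (by rw [zero_add])))
  · exact Or.inr (Or.inl (by rw [add_zero]))
  · exact Or.inl (sq_zero u)
  · exact Or.inr (Or.inr (Or.inr rfl))
  · exact Or.inr (Or.inr (Or.inl (by rw [← add_assoc, sq_zero, zero_add])))
  · exact Or.inr (Or.inr (Or.inl (by rw [add_zero])))
  · exact Or.inr (Or.inr (Or.inr (by rw [add_comm])))
  · exact Or.inl (sq_zero v)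
  · exact Or.inr (Or.inl (by rw [add_comm u v, ← add_assoc, sq_zero, zero_add]))
  · exact Or.inr (Or.inr (Or.inr (by rw [add_zero])))
  · exact Or.inr (Or.inr (Or.inl (by rw [add_comm u v, add_assoc, sq_zero, add_zero])))
  · exact Or.inr (Or.inl (by rw [add_assoc, sq_zero, add_zero]))
  · exact Or.inl (sq_zero _)

lemma pMap_image (ω : ℕ → Fin 3) :
    pMap '' (↑(Lgrp ω) : Set ↥TreeAut) =
      ({0, Ufun ω, Vfun ω, Ufun ω + Vfun ω} : Set (ℕ → ZMod 2)) := by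
  apply Set.Subset.antisymm
  · rintro _ ⟨g, hg, rfl⟩
    rw [Lgrp] at hg
    induction hg using Subgroup.closure_induction with
    | mem x hx =>
      rcases hx with rfl | hx
      · rw [pMap_ab]
        exact Or.inr (Or.inl rfl)
      · rw [Set.mem_singleton_iff] at hx
        subst hx
        rw [pMap_d]
        exact Or.inr (Or.inr (Or.inl rfl))
    | one =>
      rw [pMap_one]
      exact Or.inl rfl
    | mul x y hx hy px py =>
      rw [pMap_mul]
      exact add_mem_T px py
    | inv x hx px =>
      rw [pMap_inv]
      exact px
  · rintro q hq
    simp only [Set.mem_insert_iff, Set.mem_singleton_iff] at hq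
    rcases hq with rfl | rfl | rfl | rfl
    · exact ⟨1, Subgroup.one_mem _, pMap_one⟩
    · exact ⟨aAut * bAut ω, Subgroup.subset_closure (Or.inl rfl), pMap_ab ω⟩
    · exact ⟨dAut ω, Subgroup.subset_closure (Or.inr rfl), pMap_d ω⟩
    · exact ⟨(aAut * bAut ω) * dAut ω,
        mul_mem (Subgroup.subset_closure (Or.inl rfl))
          (Subgroup.subset_closure (Or.inr rfl)),
        by rw [pMap_mul, pMap_ab, pMap_d]⟩
/-- for `ω, η ∈ Ω_∞`, if `p(L_ω) = p(L_η)` as subsets of `(ℤ/2ℤ)^ℕ`,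
then `ω = η` or `ω_i = π(η_i)` for all `i`, where `π = (1 2)`. -/
theorem statement13 (ω η : ℕ → Fin 3) (hω : ω ∈ OmegaInf) (hη : η ∈ OmegaInf)
    (h : pMap '' (↑(Lgrp ω) : Set ↥TreeAut) = pMap '' (↑(Lgrp η) : Set ↥TreeAut)) :
    ω = η ∨ ∀ i, ω i = Equiv.swap (1 : Fin 3) 2 (η i) := by
  rw [pMap_image, pMap_image] at h
  -- V η is in the ω-set
  have hVmem : Vfun η ∈ ({0, Ufun ω, Vfun ω, Ufun ω + Vfun ω} : Set (ℕ → ZMod 2)) := by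
    rw [h]
    exact Or.inr (Or.inr (Or.inl rfl))
  have hUmem : Ufun η ∈ ({0, Ufun ω, Vfun ω, Ufun ω + Vfun ω} : Set (ℕ → ZMod 2)) := by
    rw [h]
    exact Or.inr (Or.inl rfl)
  -- V η = V ω
  have hV : Vfun η = Vfun ω := by
    simp only [Set.mem_insert_iff, Set.mem_singleton_iff] at hVmem
    rcases hVmem with hc | hc | hc | hc
    · -- V η = 0 is impossible since some η n = 1
      obtain ⟨n, -, hn⟩ := hη 1 0
      have := congrFun hc (n + 1)
      rw [Vfun, Pi.zero_apply] at this
      rw [hn] at this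
      exact absurd this (by decide)
    · -- V η = U ω impossible: coordinate 0
      have := congrFun hc 0
      rw [Vfun, Ufun] at this
      exact absurd this (by decide)
    · exact hc
    · have := congrFun hc 0
      rw [Pi.add_apply, Vfun, Ufun, Vfun] at this
      exact absurd this (by decide)
  have P1 : ∀ n, (η n = 0 ↔ ω n = 0) := by
    intro n
    have := congrFun hV (n + 1)
    rw [Vfun, Vfun] at this
    by_cases h1 : η n = 0 <;> by_cases h2 : ω n = 0 <;>
      simp [h1, h2] at this ⊢ <;> exact absurd this (by decide)
  simp only [Set.mem_insert_iff, Set.mem_singleton_iff] at hUmem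
  rcases hUmem with hc | hc | hc | hc
  · -- U η = 0 impossible: coordinate 0
    have := congrFun hc 0
    rw [Ufun, Pi.zero_apply] at this
    exact absurd this (by decide)
  · -- U η = U ω : conclude ω = η
    left
    funext n
    have h1 := P1 n
    have h2 := congrFun hc (n + 1)
    rw [Ufun, Ufun] at h2
    revert h1 h2
    generalize ω n = a
    generalize η n = b
    intro h1 h2
    fin_cases a <;> fin_cases b <;> revert h1 h2 <;> decide
  · -- U η = V ω impossible: coordinate 0
    have := congrFun hc 0
    rw [Ufun, Vfun] at this
    exact absurd this (by decide)
  · -- U η = U ω + V ω : conclude ω = π ∘ η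
    right
    intro n
    have h1 := P1 n
    have h2 := congrFun hc (n + 1)
    rw [Pi.add_apply, Ufun, Ufun, Vfun] at h2
    revert h1 h2
    generalize ω n = a
    generalize η n = b
    intro h1 h2
    fin_cases a <;> fin_cases b <;> revert h1 h2 <;> decide
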